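/- Let a ≥ 2 be an integer and set b1, b2, b3 to be integers with 2 ≤ a < b_i for i = 1,2,3. Then (3a + 1)/(a + 1)³ + 1/a ≤ 43/54, and consequently (a + b2 + b3)/(b1 b2 b3) + 1/a ≤ 43/54 whenever additionally a² < b1 b2 b3 and a < b_i for all i with b_i ≥ a + 1. -/
import Mathlib


/-- Lemma (numerics): let `a ≥ 2` be an integer.  Then
`(3a + 1)/(a + 1)³ + 1/a ≤ 43/54`, and consequently
`(a + b₂ + b₃)/(b₁b₂b₃) + 1/a ≤ 43/54` whenever `b₁, b₂, b₃` are integers with `a < bᵢ`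
for all `i` and `a² < b₁b₂b₃`. -/
theorem stmt_19 (a : ℕ) (ha : 2 ≤ a) :
    ((3 * (a : ℚ) + 1) / ((a : ℚ) + 1) ^ 3 + 1 / (a : ℚ) ≤ 43 / 54) ∧
      ∀ b1 b2 b3 : ℕ, a < b1 → a < b2 → a < b3 → a ^ 2 < b1 * b2 * b3 →
        ((a : ℚ) + b2 + b3) / ((b1 : ℚ) * b2 * b3) + 1 / (a : ℚ) ≤ 43 / 54 := by
  have haq : (2:ℚ) ≤ (a:ℚ) := by exact_mod_cast ha
  have hapos : (0:ℚ) < (a:ℚ) := by linarith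
  have hcube : (0:ℚ) < ((a:ℚ)+1)^3 := by positivity
  have key : (3*(a:ℚ)+2)/((a:ℚ)+1)^3 + 1/(a:ℚ) ≤ 43/54 := by
    rw [div_add_div _ _ (ne_of_gt hcube) (ne_of_gt hapos),
      div_le_div_iff₀ (by positivity) (by norm_num)]
    nlinarith [sq_nonneg ((a:ℚ)-2), mul_nonneg (sq_nonneg ((a:ℚ)-2)) (by linarith : (0:ℚ) ≤ (a:ℚ)-2), sq_nonneg (a:ℚ)]
  constructor
  · have h2 : (3*(a:ℚ)+1)/((a:ℚ)+1)^3 ≤ (3*(a:ℚ)+2)/((a:ℚ)+1)^3 := by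
      gcongr
      linarith
    linarith
  · intro b1 b2 b3 hb1 hb2 hb3 _
    have hb1q : (a:ℚ)+1 ≤ (b1:ℚ) := by exact_mod_cast hb1
    have hb2q : (a:ℚ)+1 ≤ (b2:ℚ) := by exact_mod_cast hb2
    have hb3q : (a:ℚ)+1 ≤ (b3:ℚ) := by exact_mod_cast hb3
    have hb1p : (0:ℚ) < (b1:ℚ) := by linarith
    have hb2p : (0:ℚ) < (b2:ℚ) := by linarith
    have hb3p : (0:ℚ) < (b3:ℚ) := by linarith
    have hstep : ((a:ℚ)+b2+b3)/((b1:ℚ)*b2*b3) ≤ (3*(a:ℚ)+2)/((a:ℚ)+1)^3 := by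
      rw [div_le_div_iff₀ (by positivity) hcube]
      nlinarith [mul_nonneg (by linarith : (0:ℚ) ≤ (b2:ℚ)-((a:ℚ)+1)) (by linarith : (0:ℚ) ≤ (b3:ℚ)-((a:ℚ)+1)),
        mul_nonneg (mul_nonneg (by linarith : (0:ℚ) ≤ (b1:ℚ)-((a:ℚ)+1)) hb2p.le) hb3p.le,
        mul_nonneg (mul_nonneg (by linarith : (0:ℚ) ≤ (b2:ℚ)-((a:ℚ)+1)) (by linarith : (0:ℚ) ≤ (b3:ℚ)-((a:ℚ)+1))) (by linarith : (0:ℚ) ≤ 3*(a:ℚ)+2),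
        mul_nonneg (by linarith : (0:ℚ) ≤ (b2:ℚ)+(b3:ℚ)-2*((a:ℚ)+1)) (by positivity : (0:ℚ) ≤ ((a:ℚ)+1)*(2*(a:ℚ)+1))]
    linarith
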